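/- arXiv:2406.16190 — 3 statements merged into one kernel-verified Lean document; each statement's English description precedes it below -/
import Mathlib

section
/- Let k be a positive integer, let A, C be complex k×k matrices, and let z be a nonzero real number such that A + i z C is invertible. Then for all vectors u, w ∈ ℂ^k, the condition A u + C w = 0 holds if and only if i (σ(z) − I) u − (1/z) (I + σ(z)) w = 0, where σ(z) := −(A + i z C)⁻¹ (A − i z C) and I is the k×k identity matrix. -/
open Matrix

/-- `σ(z) := −(A + i z C)⁻¹ (A − i z C)`. -/
noncomputable def sigma {k : ℕ} (A C : Matrix (Fin k) (Fin k) ℂ) (z : ℝ) :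
    Matrix (Fin k) (Fin k) ℂ :=
  -((A + (Complex.I * (z : ℂ)) • C)⁻¹ * (A - (Complex.I * (z : ℂ)) • C))

/-- The binding condition `A u + C w = 0` is equivalent to its `σ(z)`-form
`i (σ(z) − I) u − (1/z)(I + σ(z)) w = 0`. -/
theorem binding_condition_sigma_form (k : ℕ) (hk : 0 < k)
    (A C : Matrix (Fin k) (Fin k) ℂ) (z : ℝ) (hz : z ≠ 0)
    (hinv : IsUnit (A + (Complex.I * (z : ℂ)) • C)) :
    ∀ u w : Fin k → ℂ,
      A *ᵥ u + C *ᵥ w = 0 ↔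
        (Complex.I • (sigma A C z - 1)) *ᵥ u -
          ((1 / (z : ℂ)) • (1 + sigma A C z)) *ᵥ w = 0 := by
  intro u w
  set s : ℂ := Complex.I * (z : ℂ) with hs
  set M : Matrix (Fin k) (Fin k) ℂ := A + s • C with hM
  have hdet : IsUnit M.det := (Matrix.isUnit_iff_isUnit_det M).mp hinv
  have h1 : M⁻¹ * M = 1 := Matrix.nonsing_inv_mul M hdet
  have h2 : M * M⁻¹ = 1 := Matrix.mul_nonsing_inv M hdet
  have hσ1 : sigma A C z - 1 = (-2 : ℂ) • (M⁻¹ * A) := by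
    have : sigma A C z - 1 = -(M⁻¹ * (A - s • C)) - M⁻¹ * M := by
      rw [h1]; rfl
    rw [this, hM, Matrix.mul_add, Matrix.mul_sub]
    simp [smul_smul]
    module
  have hσ2 : (1 : Matrix (Fin k) (Fin k) ℂ) + sigma A C z = (2 * s) • (M⁻¹ * C) := by
    have : (1 : Matrix (Fin k) (Fin k) ℂ) + sigma A C z
        = M⁻¹ * M - (M⁻¹ * (A - s • C)) := by
      rw [h1]; rfl
    rw [this, hM, Matrix.mul_add, Matrix.mul_sub]
    simp [smul_smul]
    module
  have hz' : (z : ℂ) ≠ 0 := by exact_mod_cast hz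
  have hcoef : (1 / (z : ℂ)) * (2 * s) = 2 * Complex.I := by
    field_simp [hs]; ring
  have key : (Complex.I • (sigma A C z - 1)) *ᵥ u -
      ((1 / (z : ℂ)) • (1 + sigma A C z)) *ᵥ w
      = (-2 * Complex.I) • (M⁻¹ *ᵥ (A *ᵥ u + C *ᵥ w)) := by
    rw [hσ1, hσ2, smul_smul, smul_smul, hcoef]
    rw [smul_mulVec, smul_mulVec, ← Matrix.mulVec_mulVec,
      ← Matrix.mulVec_mulVec, Matrix.mulVec_add]
    have hI : Complex.I * (-2 : ℂ) = -2 * Complex.I := by ring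
    rw [hI]
    module
  rw [key]
  constructor
  · intro h; rw [h]; simp
  · intro h
    have hne : (-2 * Complex.I : ℂ) ≠ 0 := by
      simp [Complex.I_ne_zero]
    have h' : M⁻¹ *ᵥ (A *ᵥ u + C *ᵥ w) = 0 := by
      rcases smul_eq_zero.mp h with h0 | h0
      · exact absurd h0 hne
      · exact h0
    have := congrArg (fun v => M *ᵥ v) h'
    simpa [Matrix.mulVec_mulVec, h2] using this
end

section
/- Let k be a positive integer and let 𝒰, 𝒱 be unitary k×k complex matrices such that for all u, w ∈ ℂ^k, the condition i (𝒰 − I) u + (𝒰 + I) w = 0 holds if and only if i (𝒱 − I) u + (𝒱 + I) w = 0, where I is the k×k identity matrix. Then 𝒰 = 𝒱. -/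
open Matrix

lemma matrix_eq_zero_of_mulVec (k : ℕ) (M : Matrix (Fin k) (Fin k) ℂ)
    (h : ∀ x, M *ᵥ x = 0) : M = 0 := by
  ext i j
  have := congrFun (h (Pi.single j 1)) i
  simpa [Matrix.mulVec_single] using this

/-- Theorem 4.4: the unitary matrix in the canonical form of the binding condition is
uniquely determined: if unitary `𝒰`, `𝒱` define the same set of boundary-value pairs,
then `𝒰 = 𝒱`. -/
theorem unitary_binding_condition_unique (k : ℕ) (hk : 0 < k)
    (U V : Matrix (Fin k) (Fin k) ℂ)
    (hU : U ∈ Matrix.unitaryGroup (Fin k) ℂ)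
    (hV : V ∈ Matrix.unitaryGroup (Fin k) ℂ)
    (hsame : ∀ u w : Fin k → ℂ,
      (Complex.I • (U - 1)) *ᵥ u + (U + 1) *ᵥ w = 0 ↔
        (Complex.I • (V - 1)) *ᵥ u + (V + 1) *ᵥ w = 0) :
    U = V := by
  have key : ∀ x : Fin k → ℂ,
      ((2 * Complex.I) • (V - U)) *ᵥ x = 0 := by
    intro x
    have hUside : (Complex.I • (U - 1)) *ᵥ ((U + 1) *ᵥ x)
        + (U + 1) *ᵥ (((-Complex.I) • (U - 1)) *ᵥ x) = 0 := by
      rw [Matrix.mulVec_mulVec, Matrix.mulVec_mulVec, ← Matrix.add_mulVec]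
      have : (Complex.I • (U - 1)) * (U + 1) + (U + 1) * ((-Complex.I) • (U - 1)) = 0 := by
        rw [Matrix.smul_mul, Matrix.mul_smul]
        rw [neg_smul, ← smul_neg, ← smul_add]
        have : (U - 1) * (U + 1) + -((U + 1) * (U - 1)) = 0 := by noncomm_ring
        rw [this, smul_zero]
      rw [this, Matrix.zero_mulVec]
    have hVside := (hsame ((U + 1) *ᵥ x) (((-Complex.I) • (U - 1)) *ᵥ x)).mp hUside
    rw [Matrix.mulVec_mulVec, Matrix.mulVec_mulVec, ← Matrix.add_mulVec] at hVside
    have hmat : (Complex.I • (V - 1)) * (U + 1) + (V + 1) * ((-Complex.I) • (U - 1))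
        = (2 * Complex.I) • (V - U) := by
      rw [Matrix.smul_mul, Matrix.mul_smul, neg_smul, ← smul_neg, ← smul_add]
      have : (V - 1) * (U + 1) + -((V + 1) * (U - 1)) = 2 • (V - U) := by
        noncomm_ring
      rw [this]
      module
    rwa [hmat] at hVside
  have hz : ((2 * Complex.I) • (V - U)) = 0 := matrix_eq_zero_of_mulVec k _ key
  have h2i : (2 * Complex.I) ≠ 0 := by
    simp [Complex.I_ne_zero]
  have := smul_eq_zero.mp hz
  rcases this with h | h
  · exact absurd h h2i
  · exact (sub_eq_zero.mp h).symm
end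

section
/- Let k be a positive integer, let 𝒰, 𝒱 be unitary k×k complex matrices such that for all u, w ∈ ℂ^k, i (𝒰 − I) u + (𝒰 + I) w = 0 holds if and only if i (𝒱 − I) u + (𝒱 + I) w = 0 (I the k×k identity matrix). If u ∈ ℂ^k and λ ∈ ℂ satisfy 𝒰 u = λ u, then 𝒱 u = λ u. -/
open Matrix

/-- Eigenvector transfer step in the proof of Theorem 4.4: if unitary `𝒰`, `𝒱` define the
same binding condition and `𝒰 u = λ u`, then `𝒱 u = λ u`. -/
theorem eigenvector_transfer (k : ℕ) (hk : 0 < k)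
    (U V : Matrix (Fin k) (Fin k) ℂ)
    (hU : U ∈ Matrix.unitaryGroup (Fin k) ℂ)
    (hV : V ∈ Matrix.unitaryGroup (Fin k) ℂ)
    (hsame : ∀ u w : Fin k → ℂ,
      (Complex.I • (U - 1)) *ᵥ u + (U + 1) *ᵥ w = 0 ↔
        (Complex.I • (V - 1)) *ᵥ u + (V + 1) *ᵥ w = 0)
    (u : Fin k → ℂ) (lam : ℂ) (hu : U *ᵥ u = lam • u) :
    V *ᵥ u = lam • u := by
  have h := (hsame ((lam + 1) • u) ((-Complex.I * (lam - 1)) • u)).mp (by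
    simp only [smul_mulVec, mulVec_smul, sub_mulVec, add_mulVec, one_mulVec, hu]
    module)
  simp only [smul_mulVec, mulVec_smul, sub_mulVec, add_mulVec, one_mulVec] at h
  have h2 : (2 * Complex.I) • (V *ᵥ u) = (2 * Complex.I) • (lam • u) := by
    linear_combination (norm := module) h
  have hne : (2 * Complex.I) ≠ 0 := by simp [Complex.I_ne_zero]
  exact smul_right_injective _ hne h2
end
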